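/- Let Q be a generator matrix and for an allowed pair (α,β) with α ≠ β define C = [[Q, E],[0, Q]] where E = e_α e_β^T − e_α e_α^T. Then the partial derivative of the (s,r) entry of exp(Qt) with respect to q_{αβ}, where the diagonal q_{αα} = −Σ_{j≠α} q_{αj} is constrained so that rows sum to zero, equals the (s, h+r) entry of exp(Ct). -/

import Mathlib

open NormedSpace

namespace DerivExpAux
variable {n : Type*} [Fintype n] [DecidableEq n]

def blockDiagHom : (Matrix n n ℝ × Matrix n n ℝ) →+* Matrix (n ⊕ n) (n ⊕ n) ℝ where
  toFun p := Matrix.fromBlocks p.1 0 0 p.2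
  map_one' := Matrix.fromBlocks_one
  map_mul' p q := by simp [Matrix.fromBlocks_multiply]
  map_zero' := by simp
  map_add' p q := by simp [Matrix.fromBlocks_add]

lemma exp_fromBlocks_diag (A B : Matrix n n ℝ) :
    exp (Matrix.fromBlocks A 0 0 B) =
      Matrix.fromBlocks (exp A) 0 0 (exp B) := by
  letI : SeminormedRing (Matrix n n ℝ) := Matrix.linftyOpSemiNormedRing
  letI : NormedRing (Matrix n n ℝ) := Matrix.linftyOpNormedRing
  letI : NormedAlgebra ℝ (Matrix n n ℝ) := Matrix.linftyOpNormedAlgebra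
  letI : NormedAlgebra ℚ (Matrix n n ℝ) := .restrictScalars ℚ ℝ _
  letI : SeminormedRing (Matrix (n ⊕ n) (n ⊕ n) ℝ) := Matrix.linftyOpSemiNormedRing
  letI : NormedRing (Matrix (n ⊕ n) (n ⊕ n) ℝ) := Matrix.linftyOpNormedRing
  letI : NormedAlgebra ℝ (Matrix (n ⊕ n) (n ⊕ n) ℝ) := Matrix.linftyOpNormedAlgebra
  letI : NormedAlgebra ℚ (Matrix (n ⊕ n) (n ⊕ n) ℝ) := .restrictScalars ℚ ℝ _
  have hc : Continuous (blockDiagHom (n := n)) :=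
    Continuous.matrix_fromBlocks continuous_fst continuous_const continuous_const continuous_snd
  have h := map_exp (blockDiagHom (n := n)) hc (A, B)
  have h1 : (exp ((A, B) : Matrix n n ℝ × Matrix n n ℝ)).1 = exp A := Prod.fst_exp _
  have h2 : (exp ((A, B) : Matrix n n ℝ × Matrix n n ℝ)).2 = exp B := Prod.snd_exp _
  simp only [blockDiagHom, RingHom.coe_mk, MonoidHom.coe_mk, OneHom.coe_mk] at h
  convert h.symm using 2
  · rfl
  · rfl
  · exact h1.symm
  · exact h2.symm

/-- the shear unit `[[1,1],[0,1]]`. -/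
def shearUnit : (Matrix (n ⊕ n) (n ⊕ n) ℝ)ˣ where
  val := Matrix.fromBlocks 1 1 0 1
  inv := Matrix.fromBlocks 1 (-1) 0 1
  val_inv := by simp [Matrix.fromBlocks_multiply, ← Matrix.fromBlocks_one]
  inv_val := by simp [Matrix.fromBlocks_multiply, ← Matrix.fromBlocks_one]

/-- the scaling unit `[[u⁻¹,0],[0,1]]` for `u ≠ 0`. -/
noncomputable def scaleUnit (u : ℝ) (hu : u ≠ 0) : (Matrix (n ⊕ n) (n ⊕ n) ℝ)ˣ where
  val := Matrix.fromBlocks (u⁻¹ • 1) 0 0 1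
  inv := Matrix.fromBlocks (u • 1) 0 0 1
  val_inv := by
    simp [Matrix.fromBlocks_multiply, ← Matrix.fromBlocks_one, Matrix.smul_mul,
      Matrix.mul_smul, smul_smul, inv_mul_cancel₀ hu, mul_inv_cancel₀ hu]
  inv_val := by
    simp [Matrix.fromBlocks_multiply, ← Matrix.fromBlocks_one, Matrix.smul_mul,
      Matrix.mul_smul, smul_smul, inv_mul_cancel₀ hu, mul_inv_cancel₀ hu]

lemma exp_fromBlocks_triangular (A B : Matrix n n ℝ) (u : ℝ) (hu : u ≠ 0) :
    exp (Matrix.fromBlocks A (u⁻¹ • (B - A)) 0 B) =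
      Matrix.fromBlocks (exp A) (u⁻¹ • (exp B - exp A)) 0 (exp B) := by
  have h1 : Matrix.fromBlocks A (B - A) 0 B =
      (shearUnit (n := n)).val * Matrix.fromBlocks A 0 0 B * ((shearUnit (n := n))⁻¹).val := by
    simp [shearUnit, Matrix.fromBlocks_multiply, sub_eq_neg_add]
  have h2 : exp (Matrix.fromBlocks A (B - A) 0 B) =
      Matrix.fromBlocks (exp A) (exp B - exp A) 0 (exp B) := by
    rw [h1, Matrix.exp_units_conj, exp_fromBlocks_diag]
    simp [shearUnit, Matrix.fromBlocks_multiply, sub_eq_neg_add]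
  have h3 : Matrix.fromBlocks A (u⁻¹ • (B - A)) 0 B =
      (scaleUnit (n := n) u hu).val * Matrix.fromBlocks A (B - A) 0 B *
        ((scaleUnit (n := n) u hu)⁻¹).val := by
    simp [scaleUnit, Matrix.fromBlocks_multiply, Matrix.smul_mul, Matrix.mul_smul,
      smul_smul, inv_mul_cancel₀ hu, mul_inv_cancel₀ hu]
  rw [h3, Matrix.exp_units_conj, h2]
  simp [scaleUnit, Matrix.fromBlocks_multiply, Matrix.smul_mul, Matrix.mul_smul,
    smul_smul, inv_mul_cancel₀ hu, mul_inv_cancel₀ hu]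

end DerivExpAux

/-- The partial derivative of the `(s,r)` entry of `exp(Q t)` with respect to the allowed
off-diagonal entry `q_{αβ}` (with the diagonal compensating so that rows sum to zero, i.e.
`dQ/dq_{αβ} = e_α e_β^T − e_α e_α^T`) equals the `(s, h+r)` entry of `exp(C t)` where
`C = [[Q, e_α e_β^T − e_α e_α^T], [0, Q]]`. -/
theorem deriv_exp_entry_generator_constrained {h : ℕ} (Q : Matrix (Fin h) (Fin h) ℝ)
    (hoff : ∀ i j, i ≠ j → 0 ≤ Q i j) (hrow : ∀ i, ∑ j, Q i j = 0)
    (α β : Fin h) (hαβ : α ≠ β) (hpos : 0 < Q α β) (t : ℝ) (ht : 0 ≤ t) (s r : Fin h) :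
    HasDerivAt
      (fun x : ℝ => (exp (t • (Q + (x - Q α β) •
        (Matrix.single α β (1:ℝ) - Matrix.single α α 1)))
          : Matrix (Fin h) (Fin h) ℝ) s r)
      ((exp (t • Matrix.fromBlocks Q
          (Matrix.single α β (1:ℝ) - Matrix.single α α 1) 0 Q)
          : Matrix (Fin h ⊕ Fin h) (Fin h ⊕ Fin h) ℝ)
        (Sum.inl s) (Sum.inr r))
      (Q α β) := by
  set E : Matrix (Fin h) (Fin h) ℝ :=
    Matrix.single α β (1:ℝ) - Matrix.single α α 1 with hE
  set q : ℝ := Q α β with hq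
  set f : ℝ → ℝ := fun x => (exp (t • (Q + (x - q) • E)) : Matrix (Fin h) (Fin h) ℝ) s r
    with hf
  set g : ℝ → ℝ := fun u =>
    (exp (t • Matrix.fromBlocks Q E 0 (Q + u • E)) : Matrix (Fin h ⊕ Fin h) (Fin h ⊕ Fin h) ℝ)
      (Sum.inl s) (Sum.inr r) with hg
  -- the target derivative is `g 0`
  have h0 : (exp (t • Matrix.fromBlocks Q E 0 Q)
      : Matrix (Fin h ⊕ Fin h) (Fin h ⊕ Fin h) ℝ) (Sum.inl s) (Sum.inr r) = g 0 := by
    simp [hg]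
  rw [h0]
  -- continuity of `g`
  have hexp : Continuous (exp : Matrix (Fin h ⊕ Fin h) (Fin h ⊕ Fin h) ℝ →
      Matrix (Fin h ⊕ Fin h) (Fin h ⊕ Fin h) ℝ) := by
    letI : SeminormedRing (Matrix (Fin h ⊕ Fin h) (Fin h ⊕ Fin h) ℝ) :=
      Matrix.linftyOpSemiNormedRing
    letI : NormedRing (Matrix (Fin h ⊕ Fin h) (Fin h ⊕ Fin h) ℝ) := Matrix.linftyOpNormedRing
    letI : NormedAlgebra ℝ (Matrix (Fin h ⊕ Fin h) (Fin h ⊕ Fin h) ℝ) :=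
      Matrix.linftyOpNormedAlgebra
    letI : NormedAlgebra ℚ (Matrix (Fin h ⊕ Fin h) (Fin h ⊕ Fin h) ℝ) := .restrictScalars ℚ ℝ _
    exact exp_continuous
  have hgc : Continuous g := by
    apply Continuous.matrix_elem
    apply hexp.comp
    apply Continuous.fun_const_smul
    exact Continuous.matrix_fromBlocks continuous_const continuous_const continuous_const
      (continuous_const.add (continuous_id.smul continuous_const))
  -- key slope identity
  have key : ∀ x : ℝ, x ≠ q → slope f q x = g (x - q) := by
    intro x hx
    have hu : x - q ≠ 0 := sub_ne_zero.mpr hx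
    have hb : t • Matrix.fromBlocks Q E 0 (Q + (x - q) • E) =
        Matrix.fromBlocks (t • Q)
          ((x - q)⁻¹ • ((t • (Q + (x - q) • E)) - t • Q)) 0 (t • (Q + (x - q) • E)) := by
      have hscal : (x - q)⁻¹ • ((t • (Q + (x - q) • E)) - t • Q) = t • E := by
        rw [smul_add, add_sub_cancel_left, smul_smul, smul_smul]
        congr 1
        field_simp
      rw [Matrix.fromBlocks_smul, hscal, smul_zero]
    have hfq : f q = (exp (t • Q) : Matrix (Fin h) (Fin h) ℝ) s r := by
      simp [hf]
    have hfx : f x = (exp (t • (Q + (x - q) • E)) : Matrix (Fin h) (Fin h) ℝ) s r := rfl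
    rw [slope_def_field, hfq, hfx]
    show _ = (exp (t • Matrix.fromBlocks Q E 0 (Q + (x - q) • E))
      : Matrix (Fin h ⊕ Fin h) (Fin h ⊕ Fin h) ℝ) (Sum.inl s) (Sum.inr r)
    rw [hb, DerivExpAux.exp_fromBlocks_triangular _ _ _ hu]
    simp [div_eq_inv_mul, mul_comm]
  -- conclude
  rw [hasDerivAt_iff_tendsto_slope]
  have h1 : Filter.Tendsto (fun x : ℝ => x - q) (nhdsWithin q {q}ᶜ) (nhds 0) := by
    have : Filter.Tendsto (fun x : ℝ => x - q) (nhds q) (nhds (q - q)) :=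
      (continuous_id.sub continuous_const).tendsto q
    rw [sub_self] at this
    exact this.mono_left nhdsWithin_le_nhds
  have h2 : Filter.Tendsto (fun x : ℝ => g (x - q)) (nhdsWithin q {q}ᶜ) (nhds (g 0)) :=
    (hgc.continuousAt.tendsto).comp h1
  refine h2.congr' ?_
  filter_upwards [eventually_mem_nhdsWithin] with x hx
  exact (key x hx).symm
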